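/- The coefficients defined by C_0 = −Δ_2/Δ_3, D_0 = −Δ_1/Δ_3, and the recursions C_{k+1} = −(Δ_1/Δ_3)C_k for odd k, C_{k+1} = C_{k/2}/Δ_3 − (Δ_1/Δ_3)C_k for even k, D_{k+1} = −(Δ_1/Δ_3)D_k for odd k, D_{k+1} = D_{k/2} − (Δ_1/Δ_3)D_k for even k, satisfy |C_k| ≤ |C_0|(2/Δ_3)^k and |D_k| ≤ |D_0|(2/Δ_3)^k for all k ≥ 0. -/

import Mathlib

/-- The coefficients of the two-step asymptotic expansion, defined by
`C₀ = -Δ₂/Δ₃`, `D₀ = -Δ₁/Δ₃` and the parity recursions, grow at most like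
`(2/Δ₃)^k`: `|C_k| ≤ |C₀|(2/Δ₃)^k` and `|D_k| ≤ |D₀|(2/Δ₃)^k`. -/
theorem twoStep_coefficients_growth (Δ₁ Δ₂ Δ₃ : ℝ) (Cs Ds : ℕ → ℝ)
    (hΔ₁ : 0 < Δ₁) (hΔ₂ : 0 < Δ₂) (hΔ₃ : 0 < Δ₃)
    (htotal : Δ₁ + Δ₂ + Δ₃ = 1)
    (hC0 : Cs 0 = -(Δ₂ / Δ₃)) (hD0 : Ds 0 = -(Δ₁ / Δ₃))
    (hCodd : ∀ k, Odd k → Cs (k + 1) = -(Δ₁ / Δ₃) * Cs k)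
    (hCeven : ∀ k, Even k → Cs (k + 1) = (1 / Δ₃) * Cs (k / 2) - (Δ₁ / Δ₃) * Cs k)
    (hDodd : ∀ k, Odd k → Ds (k + 1) = -(Δ₁ / Δ₃) * Ds k)
    (hDeven : ∀ k, Even k → Ds (k + 1) = Ds (k / 2) - (Δ₁ / Δ₃) * Ds k) :
    ∀ k : ℕ, |Cs k| ≤ |Cs 0| * (2 / Δ₃) ^ k ∧ |Ds k| ≤ |Ds 0| * (2 / Δ₃) ^ k := by
  have hΔ₁1 : Δ₁ < 1 := by nlinarith
  have hr1 : (1 : ℝ) ≤ 2 / Δ₃ := by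
    rw [le_div_iff₀ hΔ₃]; linarith
  have hr0 : (0 : ℝ) < 2 / Δ₃ := by positivity
  intro k
  induction k using Nat.strong_induction_on with
  | _ k ih =>
    match k with
    | 0 => simp
    | n + 1 =>
      have hn2 : n / 2 < n + 1 := Nat.lt_succ_of_le (Nat.div_le_self n 2)
      have hn : n < n + 1 := Nat.lt_succ_self n
      obtain ⟨hCn, hDn⟩ := ih n hn
      obtain ⟨hCh, hDh⟩ := ih (n / 2) hn2
      have hpow : (2 / Δ₃) ^ (n / 2) ≤ (2 / Δ₃) ^ n :=
        pow_le_pow_right₀ hr1 (Nat.div_le_self n 2)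
      have hC0pos : 0 ≤ |Cs 0| := abs_nonneg _
      have hD0pos : 0 ≤ |Ds 0| := abs_nonneg _
      have hCh' : |Cs (n / 2)| ≤ |Cs 0| * (2 / Δ₃) ^ n :=
        le_trans hCh (by nlinarith)
      have hDh' : |Ds (n / 2)| ≤ |Ds 0| * (2 / Δ₃) ^ n :=
        le_trans hDh (by nlinarith)
      have hd : 0 < Δ₁ / Δ₃ := div_pos hΔ₁ hΔ₃
      have hinv : 0 < 1 / Δ₃ := by positivity
      have hpown : 0 < (2 / Δ₃) ^ n := pow_pos hr0 n
      have hCnn : 0 ≤ |Cs n| := abs_nonneg _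
      have hDnn : 0 ≤ |Ds n| := abs_nonneg _
      rcases Nat.even_or_odd n with he | ho
      · rw [hCeven n he, hDeven n he]
        constructor
        · have h1 : |(1 / Δ₃) * Cs (n / 2) - (Δ₁ / Δ₃) * Cs n| ≤
              (1 / Δ₃) * |Cs (n / 2)| + (Δ₁ / Δ₃) * |Cs n| := by
            refine le_trans (abs_sub _ _) ?_
            rw [abs_mul, abs_mul, abs_of_pos hinv, abs_of_pos hd]
          refine le_trans h1 ?_
          rw [pow_succ]
          have e1 : (1 / Δ₃) * |Cs (n / 2)| ≤ (1 / Δ₃) * (|Cs 0| * (2 / Δ₃) ^ n) :=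
            mul_le_mul_of_nonneg_left hCh' (le_of_lt hinv)
          have e2 : (Δ₁ / Δ₃) * |Cs n| ≤ (Δ₁ / Δ₃) * (|Cs 0| * (2 / Δ₃) ^ n) :=
            mul_le_mul_of_nonneg_left hCn (le_of_lt hd)
          have e3 : (1 / Δ₃) * (|Cs 0| * (2 / Δ₃) ^ n) + (Δ₁ / Δ₃) * (|Cs 0| * (2 / Δ₃) ^ n)
              ≤ |Cs 0| * ((2 / Δ₃) ^ n * (2 / Δ₃)) := by
            have h4 : (1 / Δ₃) + (Δ₁ / Δ₃) ≤ 2 / Δ₃ := by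
              rw [← add_div, div_le_div_iff₀ hΔ₃ hΔ₃]; nlinarith
            calc (1 / Δ₃) * (|Cs 0| * (2 / Δ₃) ^ n) + (Δ₁ / Δ₃) * (|Cs 0| * (2 / Δ₃) ^ n)
                = (|Cs 0| * (2 / Δ₃) ^ n) * ((1 / Δ₃) + (Δ₁ / Δ₃)) := by ring
              _ ≤ (|Cs 0| * (2 / Δ₃) ^ n) * (2 / Δ₃) :=
                  mul_le_mul_of_nonneg_left h4 (mul_nonneg hC0pos hpown.le)
              _ = |Cs 0| * ((2 / Δ₃) ^ n * (2 / Δ₃)) := by ring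
          linarith
        · have h1 : |Ds (n / 2) - (Δ₁ / Δ₃) * Ds n| ≤
              |Ds (n / 2)| + (Δ₁ / Δ₃) * |Ds n| := by
            refine le_trans (abs_sub _ _) ?_
            rw [abs_mul, abs_of_pos hd]
          refine le_trans h1 ?_
          rw [pow_succ]
          have e2 : (Δ₁ / Δ₃) * |Ds n| ≤ (Δ₁ / Δ₃) * (|Ds 0| * (2 / Δ₃) ^ n) :=
            mul_le_mul_of_nonneg_left hDn (le_of_lt hd)
          have e3 : |Ds 0| * (2 / Δ₃) ^ n + (Δ₁ / Δ₃) * (|Ds 0| * (2 / Δ₃) ^ n)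
              ≤ |Ds 0| * ((2 / Δ₃) ^ n * (2 / Δ₃)) := by
            have h4 : (1 : ℝ) + Δ₁ / Δ₃ ≤ 2 / Δ₃ := by
              rw [show (1 : ℝ) + Δ₁ / Δ₃ = (Δ₃ + Δ₁) / Δ₃ by field_simp,
                div_le_div_iff₀ hΔ₃ hΔ₃]
              nlinarith
            calc |Ds 0| * (2 / Δ₃) ^ n + (Δ₁ / Δ₃) * (|Ds 0| * (2 / Δ₃) ^ n)
                = (|Ds 0| * (2 / Δ₃) ^ n) * (1 + Δ₁ / Δ₃) := by ring
              _ ≤ (|Ds 0| * (2 / Δ₃) ^ n) * (2 / Δ₃) :=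
                  mul_le_mul_of_nonneg_left h4 (mul_nonneg hD0pos hpown.le)
              _ = |Ds 0| * ((2 / Δ₃) ^ n * (2 / Δ₃)) := by ring
          linarith
      · rw [hCodd n ho, hDodd n ho, abs_mul, abs_mul, abs_neg, abs_of_pos hd, pow_succ]
        have hle : Δ₁ / Δ₃ ≤ 2 / Δ₃ := by gcongr; linarith
        constructor
        · exact (mul_le_mul hle hCn hCnn hr0.le).trans_eq (by ring)
        · exact (mul_le_mul hle hDn hDnn hr0.le).trans_eq (by ring)
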